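/- arXiv:1805.08920 — 2 statements merged into one kernel-verified Lean document; each statement's English description precedes it below -/
import Mathlib

section
/- Let (a_t) be a nonnegative real sequence satisfying a_{t+1} ≤ (1 − κ t^{-d}) a_t + C t^{-pd} for all t ≥ 1, with constants 0 < κ < 1, C ≥ 0, p ≥ 2, and d ∈ (1/2, 1). Then there exists a constant K (depending on a₁, C, κ, p, d) such that a_t ≤ K · t^{-(p-1)d} for all t ≥ 1. -/
open Real Finset

/-- Bernoulli-type inequality for nonpositive exponents. -/
lemma bernoulli_neg_aux {s p : ℝ} (hs : 0 ≤ s) (hp : p ≤ 0) :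
    1 + p * s ≤ (1 + s) ^ p := by
  have h1 : (0:ℝ) < 1 + s := by linarith
  rw [Real.rpow_def_of_pos h1, mul_comm (Real.log (1 + s)) p]
  have hlog : Real.log (1 + s) ≤ s := by
    have := Real.log_le_sub_one_of_pos h1
    linarith
  have h2 : p * s ≤ p * Real.log (1 + s) := mul_le_mul_of_nonpos_left hlog hp
  have h3 := Real.add_one_le_exp (p * Real.log (1 + s))
  linarith

lemma thresh_aux {e κ u : ℝ} (hκ0 : 0 < κ) (hupos : 0 < u) (hu : 2 * e / κ ≤ u) :
    e * u⁻¹ ≤ κ / 2 := by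
  have huu : u⁻¹ * u = 1 := inv_mul_cancel₀ hupos.ne'
  have hui : 0 ≤ u⁻¹ := inv_nonneg.mpr hupos.le
  have hκu : 2 * e ≤ κ * u := by
    have := (div_le_iff₀ hκ0).mp hu
    linarith
  nlinarith [mul_le_mul_of_nonneg_left hκu hui]

lemma step_aux {κ C K x y w e : ℝ} (hx0 : 0 ≤ x) (hy0 : 0 ≤ y) (hK0 : 0 ≤ K)
    (hCK : C ≤ K * κ / 2) (hth : e * w ≤ κ / 2) :
    (1 - κ * x) * (K * y) + C * (y * x) ≤ K * (y * (1 - e * (w * x))) := by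
  have h1 : K * (e * w) ≤ K * (κ / 2) := mul_le_mul_of_nonneg_left hth hK0
  have h2 : 0 ≤ κ * K - C - K * (e * w) := by linarith
  nlinarith [mul_nonneg (mul_nonneg h2 hy0) hx0]


/-- Bound on a geometric-like sequence: if
`a_{t+1} ≤ (1 − κ t^{-d}) a_t + C t^{-pd}` for all `t ≥ 1`, with `0 < κ < 1`,
`C ≥ 0`, `p ≥ 2`, `d ∈ (1/2, 1)`, then `a_t ≤ K · t^{-(p-1)d}` for some constant `K`. -/
theorem stmt_3 (a : ℕ → ℝ) (κ C q d : ℝ) (hκ0 : 0 < κ) (hκ1 : κ < 1) (hC : 0 ≤ C)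
    (hq : 2 ≤ q) (hd1 : 1 / 2 < d) (hd2 : d < 1)
    (hnonneg : ∀ t : ℕ, 1 ≤ t → 0 ≤ a t)
    (hrec : ∀ t : ℕ, 1 ≤ t →
      a (t + 1) ≤ (1 - κ * (t : ℝ) ^ (-d)) * a t + C * (t : ℝ) ^ (-(q * d))) :
    ∃ K : ℝ, ∀ t : ℕ, 1 ≤ t → a t ≤ K * (t : ℝ) ^ (-((q - 1) * d)) := by
  set e := (q - 1) * d with he_def
  have hd0 : 0 < d := by linarith
  have he : d ≤ e := by nlinarith
  have he0 : 0 < e := lt_of_lt_of_le hd0 he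
  -- threshold T
  obtain ⟨T, hT⟩ := exists_nat_ge ((2 * e / κ) ^ (1 - d)⁻¹)
  set M := max T 1 with hM_def
  have hM1 : 1 ≤ M := le_max_right _ _
  have hthresh : ∀ t : ℕ, M ≤ t → e * (t:ℝ) ^ (d - 1) ≤ κ / 2 := by
    intro t htM
    have htT : (T:ℝ) ≤ (t:ℝ) := by
      exact_mod_cast le_trans (le_max_left T 1) htM
    have ht0 : (0:ℝ) < t := by
      have : 1 ≤ t := le_trans hM1 htM
      exact_mod_cast Nat.lt_of_lt_of_le Nat.zero_lt_one this
    have hbase : (2 * e / κ) ^ (1 - d)⁻¹ ≤ (t:ℝ) := le_trans hT htT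
    have h2e : (0:ℝ) ≤ 2 * e / κ := by positivity
    have hu : 2 * e / κ ≤ (t:ℝ) ^ (1 - d) := by
      have := Real.rpow_le_rpow (Real.rpow_nonneg h2e _) hbase (by linarith : (0:ℝ) ≤ 1 - d)
      rwa [Real.rpow_inv_rpow h2e (by linarith : (1:ℝ) - d ≠ 0)] at this
    have hupos : (0:ℝ) < (t:ℝ) ^ (1 - d) := Real.rpow_pos_of_pos ht0 _
    have hrw : (t:ℝ) ^ (d - 1) = ((t:ℝ) ^ (1 - d))⁻¹ := by
      rw [← Real.rpow_neg ht0.le]; ring_nf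
    rw [hrw]
    set u := (t:ℝ) ^ (1 - d)
    have huu : u⁻¹ * u = 1 := inv_mul_cancel₀ hupos.ne'
    have hκu : 2 * e ≤ κ * u := by
      have := (div_le_iff₀ hκ0).mp hu
      linarith [this]
    have hui : 0 ≤ u⁻¹ := inv_nonneg.mpr hupos.le
    nlinarith [mul_le_mul_of_nonneg_left hκu hui]
  -- the constant
  obtain ⟨K, hK_def⟩ : ∃ K : ℝ, K = 2 * C / κ + ∑ t ∈ Finset.Icc 1 M, a t * (t:ℝ) ^ e :=
    ⟨_, rfl⟩
  have hsum_nonneg : 0 ≤ ∑ t ∈ Finset.Icc 1 M, a t * (t:ℝ) ^ e := by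
    apply Finset.sum_nonneg
    intro i hi
    have hi1 : 1 ≤ i := (Finset.mem_Icc.mp hi).1
    exact mul_nonneg (hnonneg i hi1) (Real.rpow_nonneg (by positivity) _)
  have hK0 : 0 ≤ K := by
    rw [hK_def]
    have : (0:ℝ) ≤ 2 * C / κ := by positivity
    linarith
  have h2CK : 2 * C / κ ≤ K := by rw [hK_def]; linarith
  have hCK : C ≤ K * κ / 2 := by
    have h1 : 2 * C / κ * κ = 2 * C := div_mul_cancel₀ _ hκ0.ne'
    nlinarith [mul_le_mul_of_nonneg_right h2CK hκ0.le]
  -- base cases t ≤ M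
  have hbase : ∀ t : ℕ, 1 ≤ t → t ≤ M → a t ≤ K * (t:ℝ) ^ (-e) := by
    intro t ht1 htM
    have ht0 : (0:ℝ) < t := by exact_mod_cast Nat.lt_of_lt_of_le Nat.zero_lt_one ht1
    have hmem : t ∈ Finset.Icc 1 M := Finset.mem_Icc.mpr ⟨ht1, htM⟩
    have hle : a t * (t:ℝ) ^ e ≤ ∑ i ∈ Finset.Icc 1 M, a i * (i:ℝ) ^ e := by
      apply Finset.single_le_sum (f := fun i => a i * (i:ℝ) ^ e) _ hmem
      intro i hi
      exact mul_nonneg (hnonneg i (Finset.mem_Icc.mp hi).1)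
        (Real.rpow_nonneg (by positivity) _)
    have hKt : a t * (t:ℝ) ^ e ≤ K := by
      rw [hK_def]
      have : (0:ℝ) ≤ 2 * C / κ := by positivity
      linarith
    have hcancel : (t:ℝ) ^ e * (t:ℝ) ^ (-e) = 1 := by
      rw [← Real.rpow_add ht0]; simp
    calc a t = a t * (t:ℝ) ^ e * (t:ℝ) ^ (-e) := by
          rw [mul_assoc, hcancel, mul_one]
      _ ≤ K * (t:ℝ) ^ (-e) :=
          mul_le_mul_of_nonneg_right hKt (Real.rpow_nonneg ht0.le _)
  refine ⟨K, ?_⟩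
  intro t ht
  induction t, ht using Nat.le_induction with
  | base => exact hbase 1 le_rfl hM1
  | succ t ht1 ih =>
    by_cases hc : t + 1 ≤ M
    · exact hbase (t + 1) (by omega) hc
    · have htM : M ≤ t := by omega
      have ht1' : (1:ℝ) ≤ (t:ℝ) := by exact_mod_cast ht1
      have ht0 : (0:ℝ) < (t:ℝ) := by linarith
      set x := (t:ℝ) ^ (-d) with hx_def
      set y := (t:ℝ) ^ (-e) with hy_def
      set w := (t:ℝ) ^ (d - 1) with hw_def
      have hx0 : 0 ≤ x := Real.rpow_nonneg ht0.le _
      have hy0 : 0 ≤ y := Real.rpow_nonneg ht0.le _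
      have hw0 : 0 ≤ w := Real.rpow_nonneg ht0.le _
      have hx1 : x ≤ 1 := Real.rpow_le_one_of_one_le_of_nonpos ht1' (by linarith)
      have hfac : 0 ≤ 1 - κ * x := by nlinarith
      have hqd : (t:ℝ) ^ (-(q * d)) = y * x := by
        rw [hy_def, hx_def, ← Real.rpow_add ht0]
        congr 1; rw [he_def]; ring
      have hwx : w * x = 1 / (t:ℝ) := by
        rw [hw_def, hx_def, ← Real.rpow_add ht0,
          show d - 1 + -d = (-1:ℝ) by ring, Real.rpow_neg_one, one_div]
      have hth : e * w ≤ κ / 2 := by rw [hw_def]; exact hthresh t htM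
      -- step 1 : recursion + IH
      have step1 : a (t + 1) ≤ (1 - κ * x) * (K * y) + C * (y * x) := by
        calc a (t + 1) ≤ (1 - κ * x) * a t + C * (t:ℝ) ^ (-(q * d)) := hrec t ht1
          _ ≤ (1 - κ * x) * (K * y) + C * (y * x) := by
              rw [hqd]
              exact add_le_add (mul_le_mul_of_nonneg_left ih hfac) le_rfl
      -- step 2 : algebra
      have step2 : (1 - κ * x) * (K * y) + C * (y * x) ≤ K * (y * (1 - e * (w * x))) :=
        step_aux hx0 hy0 hK0 hCK hth
      -- step 3 : Bernoulli
      have hb : 1 - e * (1 / (t:ℝ)) ≤ (1 + 1 / (t:ℝ)) ^ (-e) := by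
        have := bernoulli_neg_aux (s := 1 / (t:ℝ)) (p := -e)
          (by positivity) (by linarith)
        linarith
      have hmul : y * (1 + 1 / (t:ℝ)) ^ (-e) = ((t:ℝ) + 1) ^ (-e) := by
        rw [hy_def, ← Real.mul_rpow ht0.le (by positivity)]
        congr 1
        field_simp
      have step3 : K * (y * (1 - e * (w * x))) ≤ K * ((t:ℝ) + 1) ^ (-e) := by
        rw [hwx, ← hmul]
        apply mul_le_mul_of_nonneg_left _ hK0
        exact mul_le_mul_of_nonneg_left hb hy0
      have hcast : ((t + 1 : ℕ) : ℝ) = (t:ℝ) + 1 := by push_cast; ring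
      rw [hcast]
      exact step1.trans (step2.trans step3)
end

section
/- Let θ*, Δ ∈ ℝ^p with θ* supported on S ⊆ {1,…,p}, and let λ > 0. If −(1/2)λ‖Δ‖₁ ≤ λ(‖θ*‖₁ − ‖θ* + Δ‖₁), then ‖Δ_{S^c}‖₁ ≤ 3‖Δ_S‖₁. -/
/-- LASSO cone condition: if `θ` is supported on `S`, `λ > 0` and
`−(1/2)λ‖Δ‖₁ ≤ λ(‖θ‖₁ − ‖θ + Δ‖₁)`, then `‖Δ_{Sᶜ}‖₁ ≤ 3‖Δ_S‖₁`. -/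
theorem stmt_11 {p : ℕ} (θ Δ : Fin p → ℝ) (S : Finset (Fin p)) (lam : ℝ)
    (hsupp : ∀ j ∉ S, θ j = 0) (hlam : 0 < lam)
    (hineq : -(1 / 2) * lam * ∑ j, |Δ j| ≤
      lam * ((∑ j, |θ j|) - ∑ j, |θ j + Δ j|)) :
    ∑ j ∈ Sᶜ, |Δ j| ≤ 3 * ∑ j ∈ S, |Δ j| := by
  set a := ∑ j ∈ S, |Δ j| with ha
  set b := ∑ j ∈ Sᶜ, |Δ j| with hb
  have hΔ : ∑ j, |Δ j| = a + b := (Finset.sum_add_sum_compl S _).symm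
  have hθc : ∑ j ∈ Sᶜ, |θ j| = 0 :=
    Finset.sum_eq_zero fun j hj => by
      rw [hsupp j (Finset.mem_compl.mp hj), abs_zero]
  have hθ : ∑ j, |θ j| = ∑ j ∈ S, |θ j| := by
    rw [← Finset.sum_add_sum_compl S, hθc, add_zero]
  have hc : ∑ j ∈ Sᶜ, |θ j + Δ j| = b :=
    Finset.sum_congr rfl fun j hj => by
      rw [hsupp j (Finset.mem_compl.mp hj), zero_add]
  have hS : ∑ j ∈ S, (|θ j| - |Δ j|) ≤ ∑ j ∈ S, |θ j + Δ j| :=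
    Finset.sum_le_sum fun j _ => by
      have h := abs_sub (θ j + Δ j) (Δ j)
      simp at h; linarith
  have hsum : ∑ j, |θ j + Δ j| = ∑ j ∈ S, |θ j + Δ j| + b := by
    rw [← Finset.sum_add_sum_compl S, hc]
  have hSsplit : ∑ j ∈ S, (|θ j| - |Δ j|) = (∑ j ∈ S, |θ j|) - a := by
    rw [Finset.sum_sub_distrib]
  have key : (∑ j, |θ j|) - ∑ j, |θ j + Δ j| ≤ a - b := by
    rw [hθ, hsum]; rw [hSsplit] at hS; linarith
  have h2 : -(1 / 2) * (a + b) ≤ a - b := by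
    have := hineq.trans (by nlinarith : lam * ((∑ j, |θ j|) - ∑ j, |θ j + Δ j|) ≤ lam * (a - b))
    rw [hΔ] at this
    nlinarith
  linarith
end
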